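/- The set of vertices scanned by an upward Dijkstra search in a contraction hierarchy H from a vertex v (relaxing only edges to higher-ranked vertices, assuming all edge weights are finite) equals the set of ancestors of v in the elimination tree of H, where the parent of v is its lowest-ranked higher neighbor in H. -/
import Mathlib


/-- Upward reachability in `H`: reachable along paths using only edges going from
lower to higher rank. -/
def upReach {V : Type*} (H : SimpleGraph V) (rank : V → ℕ) : V → V → Prop :=
  Relation.ReflTransGen (fun a b => H.Adj a b ∧ rank a < rank b)

/-- The set of vertices scanned by an upward Dijkstra search in a
contraction hierarchy `H` from a vertex `v` (relaxing only edges to higher-ranked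
vertices) equals the set of ancestors of `v` (including `v`) in the elimination tree
of `H`, where the parent of a non-root vertex is its lowest-ranked higher
`H`-neighbor. -/
theorem stmt7 {V : Type*} (H : SimpleGraph V) (rank : V → ℕ)
    (hrank : Function.Injective rank)
    -- the rank order is a perfect elimination ordering of `H`
    (hPEO : ∀ v a b : V, H.Adj v a → H.Adj v b → rank v < rank a → rank v < rank b →
      a ≠ b → H.Adj a b)
    (root : V) (hroot : ∀ v, v ≠ root → rank v < rank root)
    (par : V → V)
    -- `par v` is the lowest-ranked higher `H`-neighbor of `v` (for `v ≠ root`)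
    (hpar : ∀ v, v ≠ root → H.Adj v (par v) ∧ rank v < rank (par v) ∧
      ∀ w, H.Adj v w → rank v < rank w → rank (par v) ≤ rank w)
    (v : V) :
    {w | upReach H rank v w}
      = {w | Relation.ReflTransGen (fun a b => a ≠ root ∧ b = par a) v w} := by
  set T : V → V → Prop := fun a b => a ≠ root ∧ b = par a with hT
  -- key lemma: an upward edge goes to an ancestor
  have key : ∀ n a b, H.Adj a b → rank a < rank b → rank b - rank a ≤ n →
      Relation.ReflTransGen T a b := by
    intro n
    induction n with
    | zero => intro a b _ hlt hle; omega
    | succ n ih =>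
      intro a b hab hlt hle
      have haroot : a ≠ root := by
        intro h
        rcases eq_or_ne b root with hb | hb
        · rw [h, hb] at hlt; exact lt_irrefl _ hlt
        · have := hroot b hb; rw [h] at hlt; omega
      obtain ⟨hadj, hltp, hmin⟩ := hpar a haroot
      by_cases hpb : par a = b
      · exact Relation.ReflTransGen.single ⟨haroot, hpb.symm⟩
      · have hle2 : rank (par a) ≤ rank b := hmin b hab hlt
        have hlt2 : rank (par a) < rank b :=
          lt_of_le_of_ne hle2 (fun h => hpb (hrank h))
        have hadj2 : H.Adj (par a) b := hPEO a (par a) b hadj hab hltp hlt hpb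
        exact Relation.ReflTransGen.head ⟨haroot, rfl⟩
          (ih (par a) b hadj2 hlt2 (by omega))
  ext w
  simp only [Set.mem_setOf_eq]
  constructor
  · intro h
    induction h with
    | refl => exact Relation.ReflTransGen.refl
    | tail _ hstep ih =>
      exact ih.trans (key _ _ _ hstep.1 hstep.2 le_rfl)
  · intro h
    induction h with
    | refl => exact Relation.ReflTransGen.refl
    | tail _ hstep ih =>
      rename_i b c _
      obtain ⟨hb, hc⟩ := hstep
      obtain ⟨hadj, hltp, _⟩ := hpar b hb
      exact ih.tail ⟨hc ▸ hadj, hc ▸ hltp⟩
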